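/- If M is a set of mentions whose separator sequence σ satisfies |σ_k| ≤ 1 for all gaps k (no gap carries two or more markers), and moreover no two distinct mentions of M share a start position or share an end position, then the mentions of M are pairwise disjoint. -/
import Mathlib


inductive Marker | S | E | C
deriving DecidableEq

/-- Separator sequence of a set of mentions (intervals). Gap `k` lies between word `k` and word `k+1`. -/
def sep (M : Set (ℕ × ℕ)) (k : ℕ) : Set Marker :=
  {m | (m = Marker.S ∧ ∃ p ∈ M, p.1 = k + 1) ∨
       (m = Marker.E ∧ ∃ p ∈ M, p.2 = k) ∨
       (m = Marker.C ∧ ∃ p ∈ M, p.1 ≤ k ∧ k + 1 ≤ p.2)}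

/-- `M` is a set of mentions over a sentence of `n` words. -/
def Valid (n : ℕ) (M : Set (ℕ × ℕ)) : Prop :=
  ∀ p ∈ M, 1 ≤ p.1 ∧ p.1 ≤ p.2 ∧ p.2 ≤ n
theorem single_markers_imply_disjoint (n : ℕ) (M : Set (ℕ × ℕ)) (hM : Valid n M)
    (hsub : ∀ k, (sep M k).Subsingleton)
    (hbound : ∀ p ∈ M, ∀ q ∈ M, p ≠ q → p.1 ≠ q.1 ∧ p.2 ≠ q.2) :
    ∀ p ∈ M, ∀ q ∈ M, p ≠ q → p.2 < q.1 ∨ q.2 < p.1 := by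
  intro p hp q hq hne
  by_contra h
  push_neg at h
  obtain ⟨h1, h2⟩ := h
  obtain ⟨hb1, hb2⟩ := hbound p hp q hq hne
  obtain ⟨hp1, hp2, hp3⟩ := hM p hp
  obtain ⟨hq1, hq2, hq3⟩ := hM q hq
  rcases lt_or_gt_of_ne hb1 with hlt | hlt
  · have hS : Marker.S ∈ sep M (q.1 - 1) := Or.inl ⟨rfl, q, hq, by omega⟩
    have hC : Marker.C ∈ sep M (q.1 - 1) := Or.inr (Or.inr ⟨rfl, p, hp, by omega, by omega⟩)
    exact absurd (hsub _ hC hS) (by simp)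
  · have hS : Marker.S ∈ sep M (p.1 - 1) := Or.inl ⟨rfl, p, hp, by omega⟩
    have hC : Marker.C ∈ sep M (p.1 - 1) := Or.inr (Or.inr ⟨rfl, q, hq, by omega, by omega⟩)
    exact absurd (hsub _ hC hS) (by simp)
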